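/- Let c and K be natural numbers with K ≥ 1. Under the uniform probability distribution on functions f : Fin (c+1) → Fin K, the probability of the event {f j < f 0 for every j ≠ 0} is at least (1 − 1/K)^{2c} / (2(c+1)); in particular, for K ≥ 2 this probability is strictly positive. -/

import Mathlib

open Finset

theorem my_lemA (a : ℕ) : ∀ c : ℕ, (a+1)^(c+1) ≤ a^(c+1) + (c+1)*(a+1)^c := by
  intro c
  induction c with
  | zero => simp
  | succ c ih =>
    have h1 : a^(c+1) ≤ (a+1)^(c+1) := Nat.pow_le_pow_left (Nat.le_succ a) _
    calc (a+1)^(c+2) = (a+1)^(c+1) * (a+1) := by ring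
    _ ≤ (a^(c+1) + (c+1)*(a+1)^c) * (a+1) := Nat.mul_le_mul_right _ ih
    _ = a^(c+1)*a + a^(c+1) + (c+1)*(a+1)^(c+1) := by ring
    _ ≤ a^(c+2) + (a+1)^(c+1) + (c+1)*(a+1)^(c+1) := by
        rw [pow_succ]; exact Nat.add_le_add_right (Nat.add_le_add_left h1 _) _
    _ = a^(c+2) + (c+2)*(a+1)^(c+1) := by ring

theorem my_lemB (c : ℕ) : ∀ K : ℕ, (K-1)^(c+1) ≤ (c+1) * ∑ v ∈ range K, v^c := by
  intro K
  induction K with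
  | zero => simp
  | succ K ih =>
    rcases Nat.eq_zero_or_pos K with rfl | hK
    · simp
    · rw [sum_range_succ, Nat.mul_add, Nat.succ_sub_one]
      obtain ⟨a, rfl⟩ := Nat.exists_eq_add_of_le hK
      calc (1+a)^(c+1) = (a+1)^(c+1) := by ring_nf
      _ ≤ a^(c+1) + (c+1)*(a+1)^c := my_lemA a c
      _ = (1+a-1)^(c+1) + (c+1)*(1+a)^c := by rw [Nat.add_sub_cancel_left]; ring
      _ ≤ (c+1) * ∑ v ∈ range (1+a), v^c + (c+1)*(1+a)^c := Nat.add_le_add_right ih _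

theorem my_lemE (c K : ℕ) :
    (K-1)^(2*c) * K^(c+1) ≤ (∑ v ∈ range K, v^c) * (K^(2*c) * (2*(c+1))) := by
  rcases Nat.eq_zero_or_pos c with rfl | hc
  · simp only [Nat.mul_zero, pow_zero, one_mul, zero_add, pow_one, sum_const, card_range,
      smul_eq_mul, mul_one]
    omega
  · obtain ⟨c', rfl⟩ := Nat.exists_eq_add_of_lt hc
    set S := ∑ v ∈ range K, v^(0+c'+1) with hS
    have hB : (K-1)^(0+c'+1+1) ≤ (0+c'+1+1) * S := my_lemB _ K
    have hp : (K-1)^(c') ≤ K^(c') := Nat.pow_le_pow_left (Nat.sub_le K 1) _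
    calc (K-1)^(2*(0+c'+1)) * K^(0+c'+1+1)
        = (K-1)^(c'+2) * ((K-1)^(c') * K^(c'+2)) := by ring
      _ ≤ ((c'+2) * S) * (K^(c') * K^(c'+2)) := by
          refine Nat.mul_le_mul (by simpa using hB) (Nat.mul_le_mul_right _ hp)
      _ = S * (K^(2*(0+c'+1)) * (c'+2)) := by ring
      _ ≤ S * (K^(2*(0+c'+1)) * (2*(0+c'+1+1))) := by
          refine Nat.mul_le_mul_left _ (Nat.mul_le_mul_left _ (by omega))

theorem my_lemD (a b s d : ℕ) (hb : b ≠ 0) (hd : d ≠ 0) (h : a * d ≤ s * b) :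
    (a : ENNReal) / b ≤ (s : ENNReal) / d := by
  rw [ENNReal.le_div_iff_mul_le (Or.inl (by exact_mod_cast hd)) (Or.inl (ENNReal.natCast_ne_top d)),
    div_eq_mul_inv, mul_right_comm, ← div_eq_mul_inv,
    ENNReal.div_le_iff (by exact_mod_cast hb) (ENNReal.natCast_ne_top b)]
  exact_mod_cast h

theorem my_lemC (K : ℕ) (hK : 1 ≤ K) : (1 - 1/(K:ENNReal)) = ((K-1 : ℕ) : ENNReal)/(K:ℕ) := by
  have h0 : (K:ENNReal) ≠ 0 := by exact_mod_cast Nat.one_le_iff_ne_zero.mp hK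
  rw [ENNReal.natCast_sub, ENNReal.sub_div (fun _ _ => h0),
    ENNReal.div_self h0 (ENNReal.natCast_ne_top K)]
  simp

def myEquiv (c K : ℕ) :
    {f : Fin (c+1) → Fin K // ∀ j, j ≠ 0 → f j < f 0} ≃ (Σ v : Fin K, (Fin c → Fin v.val)) where
  toFun f := ⟨f.1 0, fun i => ⟨(f.1 i.succ).val, f.2 i.succ (Fin.succ_ne_zero i)⟩⟩
  invFun p := ⟨Fin.cons p.1 (fun i => ⟨(p.2 i).val, lt_trans (p.2 i).isLt p.1.isLt⟩),
    by
      intro j hj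
      rcases Fin.eq_zero_or_eq_succ j with h | ⟨i, rfl⟩
      · exact absurd h hj
      · simp [Fin.cons_succ, Fin.lt_def]⟩
  left_inv f := by
    ext j
    rcases Fin.eq_zero_or_eq_succ j with rfl | ⟨i, rfl⟩ <;> simp
  right_inv p := by
    rcases p with ⟨v, g⟩
    simp
    exact HEq.rfl

theorem my_card (c K : ℕ) :
    Fintype.card {f : Fin (c+1) → Fin K // ∀ j, j ≠ 0 → f j < f 0}
      = ∑ v ∈ range K, v^c := by
  rw [Fintype.card_congr (myEquiv c K), Fintype.card_sigma]
  simp only [Fintype.card_fun, Fintype.card_fin]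
  exact Fin.sum_univ_eq_sum_range (fun v => v^c) K

theorem my_divdiv (a : ENNReal) (b m : ℕ) (hb : b ≠ 0) :
    a / (b:ENNReal) / (m:ENNReal) = a / ((b:ENNReal) * m) := by
  rw [div_eq_mul_inv, div_eq_mul_inv, div_eq_mul_inv, mul_assoc,
    ENNReal.mul_inv (Or.inl (by exact_mod_cast hb)) (Or.inl (ENNReal.natCast_ne_top b))]

theorem stmt_6 (c K : ℕ) (hK : 1 ≤ K) :
    haveI : Nonempty (Fin (c + 1) → Fin K) := ⟨fun _ => ⟨0, hK⟩⟩
    (1 - 1 / (K : ENNReal)) ^ (2 * c) / (2 * (c + 1)) ≤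
        (PMF.uniformOfFintype (Fin (c + 1) → Fin K)).toMeasure
          {f | ∀ j, j ≠ 0 → f j < f 0} ∧
      (2 ≤ K →
        0 < (PMF.uniformOfFintype (Fin (c + 1) → Fin K)).toMeasure
          {f | ∀ j, j ≠ 0 → f j < f 0}) := by
  haveI : Nonempty (Fin (c + 1) → Fin K) := ⟨fun _ => ⟨0, hK⟩⟩
  have hK0 : K ≠ 0 := Nat.one_le_iff_ne_zero.mp hK
  have hcard : Fintype.card ↥{f : Fin (c+1) → Fin K | ∀ j, j ≠ 0 → f j < f 0}
      = ∑ v ∈ range K, v^c :=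
    (Fintype.card_congr (Equiv.subtypeEquivRight (fun f => Iff.rfl))).trans (my_card c K)
  have hMeas : (PMF.uniformOfFintype (Fin (c + 1) → Fin K)).toMeasure
      {f | ∀ j, j ≠ 0 → f j < f 0}
      = (((∑ v ∈ range K, v^c) : ℕ) : ENNReal) / ((K^(c+1) : ℕ) : ENNReal) := by
    rw [PMF.toMeasure_uniformOfFintype_apply _ (by measurability), Fintype.card_fun,
      Fintype.card_fin, Fintype.card_fin]
    congr 1
    exact_mod_cast (Fintype.card_congr (Equiv.refl _)).trans hcard
  have key : (((K-1)^(2*c) : ℕ) : ENNReal) / (((K^(2*c) * (2*(c+1)) : ℕ)) : ENNReal)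
      ≤ (((∑ v ∈ range K, v^c) : ℕ) : ENNReal) / ((K^(c+1) : ℕ) : ENNReal) := by
    apply my_lemD
    · positivity
    · positivity
    · exact my_lemE c K
  have e1 : (((K-1:ℕ):ENNReal)/((K:ℕ):ENNReal))^(2*c)
      = (((K-1)^(2*c) : ℕ) : ENNReal) / ((K^(2*c):ℕ) : ENNReal) := by
    rw [div_eq_mul_inv, mul_pow, ← ENNReal.inv_pow, ← div_eq_mul_inv]
    push_cast
    rfl
  have hbound : (1 - 1 / (K : ENNReal)) ^ (2 * c) / (2 * ((c:ENNReal) + 1))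
      = (((K-1)^(2*c) : ℕ) : ENNReal) / (((K^(2*c) * (2*(c+1)) : ℕ)) : ENNReal) := by
    have e2 : (2 * ((c:ENNReal) + 1)) = ((2*(c+1):ℕ):ENNReal) := by push_cast; ring
    rw [my_lemC K hK, e1, e2, my_divdiv _ _ _ (by positivity)]
    push_cast
    ring_nf
  constructor
  · rw [hMeas, hbound]; exact key
  · intro hK2
    rw [hMeas]
    have h1 : (1:ℕ) ≤ (K-1)^(2*c) := Nat.one_le_pow (2*c) (K-1) (Nat.sub_pos_of_lt (lt_of_lt_of_le Nat.one_lt_two hK2))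
    have hA : (((K-1)^(2*c) : ℕ) : ENNReal) ≠ 0 := by
      exact_mod_cast Nat.one_le_iff_ne_zero.mp h1
    exact lt_of_lt_of_le (ENNReal.div_pos hA (ENNReal.natCast_ne_top _)) key
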